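/- arXiv:2310.18658 — 2 statements merged into one kernel-verified Lean document; each statement's English description precedes it below -/
import Mathlib

section
/- Let f_X: ℝ^m → ℝ be twice continuously differentiable at q, and K a bounded symmetric compactly supported probability density with ∫tK(t)dt = 0 and κ₂ = ∫t²K(t)dt < ∞. With Δ_n = ∏_j δ_{n,j} and δ_{n,j} → 0, the bias of the kernel density estimator satisfies (1/Δ_n)∫_{ℝ^m} ∏_j K((q_j − x_j)/δ_{n,j}) f_X(x) dx − f_X(q) = (κ₂/2) Σ_{j=1}^m δ_{n,j}² ∂²f_X/∂x_j²(q) + Σ_j o(δ_{n,j}²) as n → ∞. -/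
open MeasureTheory Filter Asymptotics Topology
open scoped NNReal ENNReal

section AuxTaylor

lemma stmt9_taylor2 {E : Type*} [NormedAddCommGroup E] [NormedSpace ℝ E]
    {f : E → ℝ} {q : E} (hf : ContDiffAt ℝ 2 f q) :
    (fun v => f (q + v) - f q - fderiv ℝ f q v
        - (1/2) * fderiv ℝ (fderiv ℝ f) q v v) =o[𝓝 (0:E)] fun v => ‖v‖ ^ 2 := by
  set f' := fderiv ℝ f with hf'
  set B := fderiv ℝ f' q with hBdef
  have hsymm : ∀ v w, B v w = B w v := hf.isSymmSndFDerivAt (by simp)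
  have hB : HasFDerivAt f' B q :=
    ((hf.fderiv_right (m := 1) (by norm_num)).differentiableAt (by norm_num)).hasFDerivAt
  have hfd : ∀ᶠ y in 𝓝 q, DifferentiableAt ℝ f y := by
    filter_upwards [hf.eventually (by norm_num)] with y hy
    exact hy.differentiableAt (by norm_num)
  have htrans : Tendsto (fun v : E => q + v) (𝓝 0) (𝓝 q) := by
    exact (continuous_const.add continuous_id).tendsto' (0:E) q (by simp)
  rw [isLittleO_iff]
  intro ε hε
  have h1 : ∀ᶠ v in 𝓝 (0:E), ‖f' (q + v) - f' q - B v‖ ≤ ε * ‖v‖ :=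
    isLittleO_iff.1 (hasFDerivAt_iff_isLittleO_nhds_zero.1 hB) hε
  have h2 : ∀ᶠ v in 𝓝 (0:E), DifferentiableAt ℝ f (q + v) := htrans.eventually hfd
  obtain ⟨η, hηpos, hη⟩ := Metric.eventually_nhds_iff_ball.1 (h1.and h2)
  filter_upwards [Metric.ball_mem_nhds (0:E) hηpos] with v hv
  set g : E → ℝ := fun u => f (q + u) - f' q u - (1/2) * B u u with hgdef
  have hgderiv : ∀ u ∈ Metric.closedBall (0:E) ‖v‖,
      HasFDerivWithinAt g (f' (q + u) - f' q - B u) (Metric.closedBall (0:E) ‖v‖) u := by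
    intro u hu
    have humem : u ∈ Metric.ball (0:E) η := by
      rcases Metric.mem_closedBall.1 hu with h
      have : ‖u - 0‖ ≤ ‖v‖ := by simpa using h
      exact Metric.mem_ball.2 (lt_of_le_of_lt (by simpa using this)
        (by simpa using Metric.mem_ball.1 hv))
    have hd := (hη u humem).2
    have A1 : HasFDerivAt (fun u => f (q + u)) (f' (q + u)) u := by
      have := hd.hasFDerivAt.comp u ((hasFDerivAt_id u).const_add q)
      simpa [Function.comp_def] using this
    have A2 : HasFDerivAt (fun u : E => f' q u) (f' q) u := (f' q).hasFDerivAt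
    have hbb : IsBoundedBilinearMap ℝ (fun p : E × E => B p.1 p.2) :=
      B.isBoundedBilinearMap
    have hdiag : HasFDerivAt (fun u : E => (u, u))
        ((ContinuousLinearMap.id ℝ E).prod (ContinuousLinearMap.id ℝ E)) u :=
      (hasFDerivAt_id u).prodMk (hasFDerivAt_id u)
    have A3' : HasFDerivAt (fun u : E => B u u)
        ((hbb.deriv (u, u)).comp
          ((ContinuousLinearMap.id ℝ E).prod (ContinuousLinearMap.id ℝ E))) u := by
      exact HasFDerivAt.comp (f := fun u : E => (u, u)) u (hbb.hasFDerivAt (u, u)) hdiag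
    have A3 : HasFDerivAt (fun u : E => (1/2) * B u u) (B u) u := by
      have := A3'.const_mul (1/2 : ℝ)
      refine this.congr_fderiv ?_
      ext w
      simp [IsBoundedBilinearMap.deriv_apply, hsymm u w]
      ring
    exact (((A1.sub A2).sub A3).hasFDerivWithinAt)
  have hbound : ∀ u ∈ Metric.closedBall (0:E) ‖v‖,
      ‖f' (q + u) - f' q - B u‖ ≤ ε * ‖v‖ := by
    intro u hu
    have humem : u ∈ Metric.ball (0:E) η := by
      have h : ‖u‖ ≤ ‖v‖ := by simpa using Metric.mem_closedBall.1 hu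
      exact Metric.mem_ball.2 (lt_of_le_of_lt (by simpa using h)
        (by simpa using Metric.mem_ball.1 hv))
    refine le_trans ((hη u humem).1) ?_
    have h : ‖u‖ ≤ ‖v‖ := by simpa using Metric.mem_closedBall.1 hu
    nlinarith [hε.le]
  have hmv := (convex_closedBall (0:E) ‖v‖).norm_image_sub_le_of_norm_hasFDerivWithin_le
      hgderiv hbound (Metric.mem_closedBall_self (norm_nonneg v))
      (show v ∈ Metric.closedBall (0:E) ‖v‖ by
        simp [Metric.mem_closedBall, dist_zero_right])
  have hg0 : g 0 = f q := by simp [hgdef]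
  have h2' : g v - g 0 = f (q + v) - f q - f' q v - (1/2) * B v v := by
    rw [hg0]; show f (q + v) - f' q v - (1/2) * B v v - f q = _; ring
  calc ‖f (q + v) - f q - f' q v - (1/2) * B v v‖ = ‖g v - g 0‖ := by rw [h2']
    _ ≤ ε * ‖v‖ * ‖v - 0‖ := hmv
    _ = ε * ‖v‖ ^ 2 := by rw [sub_zero]; ring
    _ ≤ ε * ‖(‖v‖ ^ 2 : ℝ)‖ :=
        mul_le_mul_of_nonneg_left (le_abs_self _) hε.le

end AuxTaylor

section AuxCoV

lemma stmt9_smul_nnreal_eq (b : ℝ) :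
    (ENNReal.ofReal b) • (volume : Measure ℝ) = (Real.toNNReal b) • (volume : Measure ℝ) := rfl

instance stmt9_sf1 (b : ℝ) : SigmaFinite ((ENNReal.ofReal b) • (volume : Measure ℝ)) := by
  rw [stmt9_smul_nnreal_eq]; infer_instance

lemma stmt9_mp1 (a b : ℝ) (hb : 0 < b) :
    MeasurePreserving (fun t : ℝ => a - b * t) (ENNReal.ofReal b • volume) volume := by
  constructor
  · exact measurable_const.sub (measurable_const.mul measurable_id)
  · rw [Measure.map_smul]
    have h1 : (fun t : ℝ => a - b * t) = (fun y : ℝ => a + y) ∘ (fun t : ℝ => (-b) * t) := by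
      funext t; simp; ring
    rw [h1, ← Measure.map_map (measurable_const_add a) (measurable_const_mul _)]
    rw [Real.map_volume_mul_left (by linarith : (-b) ≠ 0)]
    rw [Measure.map_smul, map_add_left_eq_self]
    rw [smul_smul, ← ENNReal.ofReal_mul hb.le]
    have : b * |(-b)⁻¹| = 1 := by
      rw [abs_inv, abs_neg, abs_of_pos hb, mul_inv_cancel₀ hb.ne']
    rw [this]; simp

noncomputable def stmt9_covHomeo {m : ℕ} (q c : Fin m → ℝ) (hc : ∀ j, c j ≠ 0) :
    (Fin m → ℝ) ≃ₜ (Fin m → ℝ) :=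
  Homeomorph.piCongrRight fun j =>
    (Homeomorph.mulLeft₀ (c j) (hc j)).trans ((Homeomorph.neg ℝ).trans (Homeomorph.addLeft (q j)))

lemma stmt9_covHomeo_eq {m : ℕ} (q c : Fin m → ℝ) (hc : ∀ j, c j ≠ 0) :
    (fun (t : Fin m → ℝ) (j : Fin m) => q j - c j * t j) = ⇑(stmt9_covHomeo q c hc) := by
  funext t j
  simp [stmt9_covHomeo, Homeomorph.piCongrRight, sub_eq_add_neg]

lemma stmt9_pi_smul_eq {m : ℕ} (c : Fin m → ℝ) :
    Measure.pi (fun j : Fin m => ENNReal.ofReal (c j) • volume)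
      = (∏ j, ENNReal.ofReal (c j)) • (volume : Measure (Fin m → ℝ)) := by
  refine Measure.pi_eq fun s hs => ?_
  simp only [Measure.smul_apply, smul_eq_mul]
  rw [volume_pi_pi, ← Finset.prod_mul_distrib]

lemma stmt9_measurePreserving {m : ℕ} (q c : Fin m → ℝ) (hc : ∀ j, 0 < c j) :
    MeasurePreserving (fun (t : Fin m → ℝ) (j : Fin m) => q j - c j * t j)
      (Measure.pi fun j => ENNReal.ofReal (c j) • volume) volume := by
  have := measurePreserving_pi (fun j : Fin m => ENNReal.ofReal (c j) • volume)
    (fun _ => (volume : Measure ℝ)) (fun j => stmt9_mp1 (q j) (c j) (hc j))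
  rwa [← volume_pi] at this

lemma stmt9_cov {m : ℕ} (q c : Fin m → ℝ) (hc : ∀ j, 0 < c j) (G : (Fin m → ℝ) → ℝ)
    (hG : Integrable G) :
    (∫ x, G x) = (∏ j, c j) * (∫ t : Fin m → ℝ, G (fun j => q j - c j * t j)) ∧
      Integrable (fun t : Fin m → ℝ => G (fun j => q j - c j * t j)) := by
  have hT := stmt9_measurePreserving q c hc
  have hTemb : MeasurableEmbedding (fun (t : Fin m → ℝ) (j : Fin m) => q j - c j * t j) := by
    rw [stmt9_covHomeo_eq q c (fun j => (hc j).ne')]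
    exact (stmt9_covHomeo q c _).measurableEmbedding
  have hprodne : (∏ j, ENNReal.ofReal (c j)) ≠ 0 := by
    rw [Finset.prod_ne_zero_iff]
    exact fun j _ => (ENNReal.ofReal_pos.2 (hc j)).ne'
  have hprodtop : (∏ j, ENNReal.ofReal (c j)) ≠ ⊤ :=
    ENNReal.prod_ne_top (fun j _ => ENNReal.ofReal_ne_top)
  have hint : Integrable ((fun t : Fin m → ℝ => G (fun j => q j - c j * t j)))
      (Measure.pi fun j => ENNReal.ofReal (c j) • volume) :=
    (hT.integrable_comp_emb hTemb).2 hG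
  constructor
  · rw [← hT.integral_comp hTemb G, stmt9_pi_smul_eq c, integral_smul_measure]
    rw [ENNReal.toReal_prod]
    congr 1
    exact Finset.prod_congr rfl fun j _ => ENNReal.toReal_ofReal (hc j).le
  · rw [stmt9_pi_smul_eq c] at hint
    exact (integrable_smul_measure hprodne hprodtop).1 hint

end AuxCoV

section AuxProd

lemma stmt9_prod_update_eval {m : ℕ} (F : Fin m → ℝ → ℝ) (j : Fin m) (φ : ℝ → ℝ)
    (g : Fin m → ℝ) (s : Finset (Fin m)) (hj : j ∈ s) :
    ∏ l ∈ s, Function.update F j φ l (g l) = φ (g j) * ∏ l ∈ s.erase j, F l (g l) := by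
  rw [← Finset.mul_prod_erase s (fun l => Function.update F j φ l (g l)) hj,
    Function.update_self]
  congr 1
  exact Finset.prod_congr rfl fun l hl => by
    rw [Function.update_of_ne (Finset.ne_of_mem_erase hl)]

lemma stmt9_pi_expand {m : ℕ} (v : Fin m → ℝ) :
    v = ∑ j, v j • (Pi.single j (1:ℝ) : Fin m → ℝ) := by
  have h : ∀ j, v j • (Pi.single j (1:ℝ) : Fin m → ℝ) = Pi.single j (v j) := fun j => by
    rw [← Pi.single_smul, smul_eq_mul, mul_one]
  simp_rw [h, Finset.univ_sum_single]

lemma stmt9_I0 {m : ℕ} (K : ℝ → ℝ) (hKone : (∫ t, K t) = 1) :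
    (∫ t : Fin m → ℝ, ∏ l, K (t l)) = 1 := by
  rw [volume_pi, integral_fintype_prod_eq_prod (ι := Fin m) (fun _ => K)]
  simp [hKone]

lemma stmt9_Qrw {m : ℕ} (K : ℝ → ℝ) (j : Fin m) :
    (fun t : Fin m → ℝ => t j * ∏ l, K (t l))
      = fun t => ∏ l, Function.update (fun _ : Fin m => K) j (fun s => s * K s) l (t l) := by
  funext t
  rw [stmt9_prod_update_eval _ j _ t Finset.univ (Finset.mem_univ j),
    ← Finset.mul_prod_erase Finset.univ (fun l => K (t l)) (Finset.mem_univ j)]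
  ring

lemma stmt9_I1 {m : ℕ} (K : ℝ → ℝ) (hKodd : (∫ t, t * K t) = 0) (j : Fin m) :
    (∫ t : Fin m → ℝ, t j * ∏ l, K (t l)) = 0 := by
  rw [stmt9_Qrw K j, volume_pi, integral_fintype_prod_eq_prod (ι := Fin m)
    (fun l => Function.update (fun _ : Fin m => K) j (fun s => s * K s) l)]
  refine Finset.prod_eq_zero (Finset.mem_univ j) ?_
  simp only [Function.update_self]
  exact hKodd

lemma stmt9_Rrw_ne {m : ℕ} (K : ℝ → ℝ) {j l : Fin m} (hjl : j ≠ l) :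
    (fun t : Fin m → ℝ => t j * t l * ∏ l', K (t l'))
      = fun t => ∏ l', Function.update (Function.update (fun _ : Fin m => K) j
          (fun s => s * K s)) l (fun s => s * K s) l' (t l') := by
  have hjmem : j ∈ Finset.univ.erase l := Finset.mem_erase.2 ⟨hjl, Finset.mem_univ j⟩
  funext t
  rw [stmt9_prod_update_eval _ l _ t Finset.univ (Finset.mem_univ l),
    stmt9_prod_update_eval _ j _ t _ hjmem,
    ← Finset.mul_prod_erase Finset.univ (fun l' => K (t l')) (Finset.mem_univ l),
    ← Finset.mul_prod_erase (Finset.univ.erase l) (fun l' => K (t l')) hjmem]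
  ring

lemma stmt9_Rrw_eq {m : ℕ} (K : ℝ → ℝ) (j : Fin m) :
    (fun t : Fin m → ℝ => t j * t j * ∏ l', K (t l'))
      = fun t => ∏ l', Function.update (fun _ : Fin m => K) j (fun s => s ^ 2 * K s) l' (t l') := by
  funext t
  rw [stmt9_prod_update_eval _ j _ t Finset.univ (Finset.mem_univ j),
    ← Finset.mul_prod_erase Finset.univ (fun l' => K (t l')) (Finset.mem_univ j)]
  ring

lemma stmt9_I2 {m : ℕ} (K : ℝ → ℝ) (hKodd : (∫ t, t * K t) = 0) {j l : Fin m} (hjl : j ≠ l) :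
    (∫ t : Fin m → ℝ, t j * t l * ∏ l', K (t l')) = 0 := by
  rw [stmt9_Rrw_ne K hjl, volume_pi, integral_fintype_prod_eq_prod (ι := Fin m) _]
  refine Finset.prod_eq_zero (Finset.mem_univ l) ?_
  simp only [Function.update_self]
  exact hKodd

lemma stmt9_I3 {m : ℕ} (K : ℝ → ℝ) (hKone : (∫ t, K t) = 1) (j : Fin m) :
    (∫ t : Fin m → ℝ, t j * t j * ∏ l, K (t l)) = ∫ s, s ^ 2 * K s := by
  rw [stmt9_Rrw_eq K j, volume_pi, integral_fintype_prod_eq_prod (ι := Fin m) _]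
  have hupd : (fun l : Fin m => ∫ x, Function.update (fun _ : Fin m => K) j
      (fun s => s ^ 2 * K s) l x)
      = Function.update (fun _ : Fin m => ∫ x, K x) j (∫ s, s ^ 2 * K s) := by
    funext l
    exact Function.apply_update (fun (_ : Fin m) (g : ℝ → ℝ) => ∫ x, g x)
      (fun _ => K) j (fun s => s ^ 2 * K s) l
  calc ∏ l : Fin m, ∫ x, Function.update (fun _ : Fin m => K) j (fun s => s ^ 2 * K s) l x
      = ∏ l : Fin m, Function.update (fun _ : Fin m => ∫ x, K x) j (∫ s, s ^ 2 * K s) l := by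
        rw [hupd]
    _ = (∫ s, s ^ 2 * K s) * ∏ l ∈ Finset.univ \ {j}, ∫ x, K x :=
        Finset.prod_update_of_mem (Finset.mem_univ j) _ _
    _ = ∫ s, s ^ 2 * K s := by rw [hKone]; simp

lemma stmt9_Qint {m : ℕ} (K : ℝ → ℝ) (hKint : Integrable K)
    (hφ1int : Integrable (fun s : ℝ => s * K s)) (j : Fin m) :
    Integrable (fun t : Fin m → ℝ => t j * ∏ l, K (t l)) := by
  rw [stmt9_Qrw K j]
  refine Integrable.fintype_prod (𝕜 := ℝ) fun l => ?_
  rcases eq_or_ne l j with h | h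
  · subst h; simpa [Function.update_self] using hφ1int
  · simpa [Function.update_of_ne h] using hKint

lemma stmt9_Rint {m : ℕ} (K : ℝ → ℝ) (hKint : Integrable K)
    (hφ1int : Integrable (fun s : ℝ => s * K s))
    (hKsq : Integrable (fun s : ℝ => s ^ 2 * K s)) (j l : Fin m) :
    Integrable (fun t : Fin m → ℝ => t j * t l * ∏ l', K (t l')) := by
  rcases eq_or_ne j l with h | h
  · subst h
    rw [stmt9_Rrw_eq K j]
    refine Integrable.fintype_prod (𝕜 := ℝ) fun l' => ?_
    rcases eq_or_ne l' j with h | h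
    · subst h; simpa [Function.update_self] using hKsq
    · simpa [Function.update_of_ne h] using hKint
  · rw [stmt9_Rrw_ne K h]
    refine Integrable.fintype_prod (𝕜 := ℝ) fun l' => ?_
    rcases eq_or_ne l' l with h1 | h1
    · subst h1; simpa [Function.update_self] using hφ1int
    · rcases eq_or_ne l' j with h2 | h2
      · subst h2; simpa [Function.update_of_ne h1, Function.update_self] using hφ1int
      · simpa [Function.update_of_ne h1, Function.update_of_ne h2] using hKint

lemma stmt9_Pint {m : ℕ} (K : ℝ → ℝ) (hKint : Integrable K) :
    Integrable (fun t : Fin m → ℝ => ∏ l, K (t l)) :=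
  Integrable.fintype_prod (𝕜 := ℝ) fun _ => hKint

end AuxProd
set_option maxHeartbeats 1000000

/-- Second-order bias expansion of the multivariate product-kernel density estimator:
the bias minus `(κ₂/2) Σⱼ δ_{n,j}² ∂²f_X/∂xⱼ²(q)` is `o(Σⱼ δ_{n,j}²)`. -/
theorem stmt9 {m : ℕ} (fX : (Fin m → ℝ) → ℝ) (q : Fin m → ℝ)
    (hfX : ContDiffAt ℝ 2 fX q)
    (hfXint : Integrable fX)
    (K : ℝ → ℝ)
    (hKbdd : ∃ C, ∀ t, |K t| ≤ C) (hKsymm : ∀ t, K (-t) = K t)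
    (hKsupp : HasCompactSupport K) (hKnonneg : ∀ t, 0 ≤ K t)
    (hKone : (∫ t, K t) = 1)
    (hKodd : (∫ t, t * K t) = 0)
    (hKsq : Integrable (fun t => t ^ 2 * K t))
    (δ : ℕ → Fin m → ℝ) (hδpos : ∀ n j, 0 < δ n j)
    (hδ0 : ∀ j, Tendsto (fun n => δ n j) atTop (nhds 0)) :
    (fun n : ℕ =>
        ((1 / ∏ j, δ n j) *
            (∫ x : Fin m → ℝ, (∏ j, K ((q j - x j) / δ n j)) * fX x) - fX q)
          - ((∫ t, t ^ 2 * K t) / 2) *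
              ∑ j, (δ n j) ^ 2 *
                deriv (deriv (fun t => fX (Function.update q j t))) (q j))
      =o[atTop] (fun n => ∑ j, (δ n j) ^ 2) := by
  classical
  obtain ⟨C, hC⟩ := hKbdd
  have hC0 : 0 ≤ C := le_trans (abs_nonneg _) (hC 0)
  have hKint : Integrable K := by
    by_contra h
    rw [integral_undef h] at hKone
    norm_num at hKone
  obtain ⟨r, hr⟩ := hKsupp.isBounded.subset_closedBall 0
  set R₀ : ℝ := max r 1 with hR₀def
  have hR₀pos : (0:ℝ) < R₀ := lt_of_lt_of_le one_pos (le_max_right r 1)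
  have hKzero : ∀ s : ℝ, R₀ < |s| → K s = 0 := by
    intro s hs
    by_contra h
    have h1 : s ∈ tsupport K := subset_tsupport K (by simpa using h)
    have h2 := hr h1
    rw [Metric.mem_closedBall, Real.dist_eq, sub_zero] at h2
    have : R₀ < r := lt_of_lt_of_le hs h2
    exact absurd this (not_lt.2 (le_max_left r 1))
  have hφ1int : Integrable (fun s : ℝ => s * K s) := by
    refine Integrable.mono' (hKint.abs.const_mul R₀)
      (measurable_id.aestronglyMeasurable.mul hKint.1) (ae_of_all _ fun s => ?_)
    rcases le_or_gt |s| R₀ with h | h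
    · rw [norm_mul, Real.norm_eq_abs, Real.norm_eq_abs]
      exact mul_le_mul_of_nonneg_right h (abs_nonneg _)
    · simp [hKzero s h, abs_nonneg, mul_nonneg hR₀pos.le (abs_nonneg _)]
  -- notation
  set P : (Fin m → ℝ) → ℝ := fun t => ∏ l, K (t l) with hPdef
  have hPint : Integrable P := stmt9_Pint K hKint
  have hPnn : ∀ t, 0 ≤ P t := fun t => Finset.prod_nonneg fun l _ => hKnonneg _
  have hPone : (∫ t : Fin m → ℝ, P t) = 1 := stmt9_I0 K hKone
  set κ : ℝ := ∫ s : ℝ, s ^ 2 * K s with hκdef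
  have hRval : ∀ j l : Fin m, (∫ t : Fin m → ℝ, t j * t l * P t)
      = if j = l then κ else 0 := by
    intro j l
    rcases eq_or_ne j l with h | h
    · subst h; simp only [if_pos rfl]; exact stmt9_I3 K hKone j
    · simp only [if_neg h]; exact stmt9_I2 K hKodd h
  -- derivative notation
  have hfXd : DifferentiableAt ℝ fX q := hfX.differentiableAt (by norm_num)
  set L : (Fin m → ℝ) →L[ℝ] ℝ := fderiv ℝ fX q with hLdef
  set B := fderiv ℝ (fderiv ℝ fX) q with hBdef
  set e : Fin m → (Fin m → ℝ) := fun j => Pi.single j 1 with hedef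
  -- coordinate second derivatives
  have hBii : ∀ j, deriv (deriv (fun t => fX (Function.update q j t))) (q j)
      = B (e j) (e j) := by
    intro j
    have hu : ∀ s : ℝ, HasDerivAt (fun s' => Function.update q j s') (e j) s := by
      intro s
      have h1 : (fun s' : ℝ => Function.update q j s')
          = fun s' => q + (s' - q j) • (e j) := by
        funext s' l
        rcases eq_or_ne l j with h | h
        · subst h; simp [hedef]
        · simp [Function.update_of_ne h, hedef, Pi.single_eq_of_ne h]
      rw [h1]
      simpa using (((hasDerivAt_id s).sub_const (q j)).smul_const (e j)).const_add q
    have hu0 : Function.update q j (q j) = q := Function.update_eq_self j q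
    have hucont : Tendsto (fun s => Function.update q j s) (𝓝 (q j)) (𝓝 q) := by
      have := (hu (q j)).continuousAt
      rwa [ContinuousAt, hu0] at this
    have hfd : ∀ᶠ y in 𝓝 q, DifferentiableAt ℝ fX y := by
      filter_upwards [hfX.eventually (by norm_num)] with y hy
      exact hy.differentiableAt (by norm_num)
    have hev : (fun s => deriv (fun s' => fX (Function.update q j s')) s)
        =ᶠ[𝓝 (q j)] fun s => fderiv ℝ fX (Function.update q j s) (e j) := by
      filter_upwards [hucont.eventually hfd] with s hs
      exact (hs.hasFDerivAt.comp_hasDerivAt s (hu s)).deriv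
    have hderiv2 : deriv (deriv (fun t => fX (Function.update q j t))) (q j)
        = deriv (fun s => fderiv ℝ fX (Function.update q j s) (e j)) (q j) :=
      Filter.EventuallyEq.deriv_eq hev
    rw [hderiv2]
    have hB' : HasFDerivAt (fderiv ℝ fX) B q :=
      ((hfX.fderiv_right (m := 1) (by norm_num)).differentiableAt (by norm_num)).hasFDerivAt
    have happ : HasFDerivAt (fun y => fderiv ℝ fX y (e j))
        ((ContinuousLinearMap.apply ℝ ℝ (e j)).comp B) q :=
      (ContinuousLinearMap.apply ℝ ℝ (e j)).hasFDerivAt.comp q hB'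
    have happ' : HasFDerivAt (fun y => fderiv ℝ fX y (e j))
        ((ContinuousLinearMap.apply ℝ ℝ (e j)).comp B) (Function.update q j (q j)) := by
      rwa [hu0]
    have hcomp : HasDerivAt (fun s => fderiv ℝ fX (Function.update q j s) (e j))
        (B (e j) (e j)) (q j) := by
      have := happ'.comp_hasDerivAt (q j) (hu (q j))
      simpa [Function.comp_def] using this
    exact hcomp.deriv
  -- linear/bilinear expansions
  have hw : ∀ v : Fin m → ℝ, v = ∑ j, v j • (e j) := fun v => stmt9_pi_expand v
  have hL1 : ∀ v : Fin m → ℝ, L v = ∑ j, v j * L (e j) := by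
    intro v
    conv_lhs => rw [hw v]
    rw [map_sum]
    exact Finset.sum_congr rfl fun j _ => by rw [_root_.map_smul, smul_eq_mul]
  have hB2 : ∀ v u : Fin m → ℝ, B v u = ∑ j, ∑ l, (v j * u l) * B (e j) (e l) := by
    intro v u
    have h1 : B v u = ∑ j, v j * B (e j) u := by
      conv_lhs => rw [hw v]
      rw [map_sum, ContinuousLinearMap.sum_apply]
      exact Finset.sum_congr rfl fun j _ => by
        rw [_root_.map_smul, ContinuousLinearMap.smul_apply, smul_eq_mul]
    have h2 : ∀ j, B (e j) u = ∑ l, u l * B (e j) (e l) := by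
      intro j
      conv_lhs => rw [hw u]
      rw [map_sum]
      exact Finset.sum_congr rfl fun l _ => by rw [_root_.map_smul, smul_eq_mul]
    rw [h1]
    refine Finset.sum_congr rfl fun j _ => ?_
    rw [h2 j, Finset.mul_sum]
    exact Finset.sum_congr rfl fun l _ => by ring
  -- remainder function
  set rr : (Fin m → ℝ) → ℝ := fun v => fX (q + v) - fX q - L v - (1/2) * B v v with hrrdef
  have htay : rr =o[𝓝 (0 : Fin m → ℝ)] fun v => ‖v‖ ^ 2 := stmt9_taylor2 hfX
  -- representation of the bias
  have hrepr : ∀ n,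
      ((1 / ∏ j, δ n j) *
          (∫ x : Fin m → ℝ, (∏ j, K ((q j - x j) / δ n j)) * fX x) - fX q)
        - (κ / 2) * ∑ j, (δ n j) ^ 2 *
            deriv (deriv (fun t => fX (Function.update q j t))) (q j)
      = ∫ t : Fin m → ℝ, P t * rr (fun j => -(δ n j * t j)) := by
    intro n
    set c : Fin m → ℝ := δ n with hcdef
    have hcpos : ∀ j, 0 < c j := hδpos n
    set G : (Fin m → ℝ) → ℝ := fun x => (∏ j, K ((q j - x j) / c j)) * fX x with hGdef
    -- measurability of G
    have hGaesm : AEStronglyMeasurable G volume := by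
      have h1 : (fun x : Fin m → ℝ => ∏ j, K ((q j - x j) / c j))
          = P ∘ (fun (x : Fin m → ℝ) (j : Fin m) => q j / c j - (1 / c j) * x j) := by
        funext x
        simp only [Function.comp, hPdef]
        refine Finset.prod_congr rfl fun j _ => ?_
        congr 1
        rw [sub_div, one_div, inv_mul_eq_div]
      have hT' := stmt9_measurePreserving (fun j => q j / c j) (fun j => 1 / c j)
        (fun j => show (0:ℝ) < 1 / c j by have := hcpos j; positivity)
      have haesm := hPint.1.comp_quasiMeasurePreserving hT'.quasiMeasurePreserving
      rw [stmt9_pi_smul_eq] at haesm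
      have habs : (volume : Measure (Fin m → ℝ))
          ≪ (∏ j, ENNReal.ofReal (1 / c j)) • volume := by
        refine Measure.AbsolutelyContinuous.mk fun s _ hs => ?_
        rw [Measure.smul_apply, smul_eq_mul] at hs
        rcases mul_eq_zero.1 hs with h | h
        · exact absurd h (Finset.prod_ne_zero_iff.2 fun j _ =>
            (ENNReal.ofReal_pos.2 (show (0:ℝ) < 1 / c j by
              have := hcpos j; positivity)).ne')
        · exact h
      have := haesm.mono_ac habs
      rw [← h1] at this
      exact this.mul hfXint.1
    have hGbound : ∀ x, ‖G x‖ ≤ C ^ m * ‖fX x‖ := by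
      intro x
      rw [hGdef]
      simp only [norm_mul]
      refine mul_le_mul_of_nonneg_right ?_ (norm_nonneg _)
      rw [Real.norm_eq_abs, Finset.abs_prod]
      calc ∏ j, |K ((q j - x j) / c j)| ≤ ∏ _j : Fin m, C :=
            Finset.prod_le_prod (fun j _ => abs_nonneg _) (fun j _ => hC _)
        _ = C ^ m := by simp [Finset.prod_const]
    have hGint : Integrable G :=
      Integrable.mono' (hfXint.norm.const_mul (C ^ m)) hGaesm (ae_of_all _ hGbound)
    obtain ⟨hcov_eq, hcov_int⟩ := stmt9_cov q c hcpos G hGint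
    have hprodpos : 0 < ∏ j, c j := Finset.prod_pos fun j _ => hcpos j
    have hGT : ∀ t : Fin m → ℝ,
        G (fun j => q j - c j * t j) = P t * fX (fun j => q j - c j * t j) := by
      intro t
      show (∏ j, K ((q j - (q j - c j * t j)) / c j)) * fX (fun j => q j - c j * t j)
          = (∏ l, K (t l)) * fX (fun j => q j - c j * t j)
      congr 1
      refine Finset.prod_congr rfl fun j _ => ?_
      congr 1
      have hne := (hcpos j).ne'
      field_simp
      ring
    have hqw : ∀ t : Fin m → ℝ,
        (fun j => q j - c j * t j) = q + fun j => -(c j * t j) := by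
      intro t; funext j; simp [sub_eq_add_neg]
    -- the four pieces
    have hA : Integrable (fun t : Fin m → ℝ => P t * fX (fun j => q j - c j * t j)) :=
      hcov_int.congr (ae_of_all _ fun t => hGT t)
    have hA0 : Integrable (fun t : Fin m → ℝ => P t * fX q) := hPint.mul_const (fX q)
    have hA1rw : (fun t : Fin m → ℝ => P t * L (fun j => -(c j * t j)))
        = fun t => ∑ j, (-(c j) * L (e j)) * (t j * P t) := by
      funext t
      rw [hL1 (fun j => -(c j * t j)), Finset.mul_sum]
      exact Finset.sum_congr rfl fun j _ => by
        show P t * (-(c j * t j) * L (e j)) = -(c j) * L (e j) * (t j * P t)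
        ring
    have hA1int : Integrable (fun t : Fin m → ℝ => P t * L (fun j => -(c j * t j))) := by
      rw [hA1rw]
      exact integrable_finset_sum _ fun j _ => (stmt9_Qint K hKint hφ1int j).const_mul _
    have hA1val : (∫ t : Fin m → ℝ, P t * L (fun j => -(c j * t j))) = 0 := by
      rw [hA1rw, integral_finset_sum _ fun j _ => (stmt9_Qint K hKint hφ1int j).const_mul _]
      refine Finset.sum_eq_zero fun j _ => ?_
      rw [integral_const_mul, stmt9_I1 K hKodd j, mul_zero]
    have hA2rw : (fun t : Fin m → ℝ =>
          P t * ((1/2) * B (fun j => -(c j * t j)) (fun j => -(c j * t j))))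
        = fun t => ∑ j, ∑ l, ((1/2) * (c j * c l * B (e j) (e l))) * (t j * t l * P t) := by
      funext t
      rw [hB2 (fun j => -(c j * t j)) (fun j => -(c j * t j))]
      simp only [Finset.mul_sum]
      refine Finset.sum_congr rfl fun j _ => Finset.sum_congr rfl fun l _ => ?_
      show P t * (1/2 * (-(c j * t j) * -(c l * t l) * B (e j) (e l))) = _
      ring
    have hA2int : Integrable (fun t : Fin m → ℝ =>
        P t * ((1/2) * B (fun j => -(c j * t j)) (fun j => -(c j * t j)))) := by
      rw [hA2rw]
      exact integrable_finset_sum _ fun j _ => integrable_finset_sum _ fun l _ =>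
        (stmt9_Rint K hKint hφ1int hKsq j l).const_mul _
    have hA2val : (∫ t : Fin m → ℝ,
        P t * ((1/2) * B (fun j => -(c j * t j)) (fun j => -(c j * t j))))
        = (κ / 2) * ∑ j, c j ^ 2 * B (e j) (e j) := by
      rw [hA2rw, integral_finset_sum _ fun j _ => integrable_finset_sum _ fun l _ =>
        (stmt9_Rint K hKint hφ1int hKsq j l).const_mul _]
      rw [Finset.mul_sum]
      refine Finset.sum_congr rfl fun j _ => ?_
      rw [integral_finset_sum _ fun l _ => (stmt9_Rint K hKint hφ1int hKsq j l).const_mul _]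
      have hterm : ∀ l : Fin m, (∫ t : Fin m → ℝ,
          ((1/2) * (c j * c l * B (e j) (e l))) * (t j * t l * P t))
          = if j = l then (κ/2) * (c j ^ 2 * B (e j) (e j)) else 0 := by
        intro l
        rw [integral_const_mul, hRval j l]
        rcases eq_or_ne j l with h | h
        · subst h; rw [if_pos rfl, if_pos rfl]; ring
        · rw [if_neg h, if_neg h, mul_zero]
      rw [Finset.sum_congr rfl fun l _ => hterm l]
      simp
    have hptwise : ∀ t : Fin m → ℝ, P t * rr (fun j => -(c j * t j))
        = P t * fX (fun j => q j - c j * t j) - P t * fX q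
          - P t * L (fun j => -(c j * t j))
          - P t * ((1/2) * B (fun j => -(c j * t j)) (fun j => -(c j * t j))) := by
      intro t
      have hfix : fX (q + fun j => -(c j * t j)) = fX (fun j => q j - c j * t j) := by
        rw [← hqw t]
      show P t * (fX (q + fun j => -(c j * t j)) - fX q - L _ - (1/2) * B _ _) = _
      rw [hfix]; ring
    have hA01 : Integrable (fun t : Fin m → ℝ =>
        P t * fX (fun j => q j - c j * t j) - P t * fX q) := hA.sub hA0
    have hA012 : Integrable (fun t : Fin m → ℝ =>
        P t * fX (fun j => q j - c j * t j) - P t * fX q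
          - P t * L (fun j => -(c j * t j))) := hA01.sub hA1int
    have hint_eq : (∫ t : Fin m → ℝ, P t * rr (fun j => -(c j * t j)))
        = (∫ t : Fin m → ℝ, P t * fX (fun j => q j - c j * t j)) - fX q - 0
          - ((κ/2) * ∑ j, c j ^ 2 * B (e j) (e j)) := by
      rw [integral_congr_ae (ae_of_all _ hptwise)]
      rw [integral_sub hA012 hA2int, integral_sub hA01 hA1int, integral_sub hA hA0]
      rw [hA1val, hA2val, integral_mul_const, hPone, one_mul]
    have hfinal : (1 / ∏ j, c j) * (∫ x, G x)
        = ∫ t : Fin m → ℝ, P t * fX (fun j => q j - c j * t j) := by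
      rw [hcov_eq, integral_congr_ae (ae_of_all _ fun t => (hGT t)), one_div,
        inv_mul_cancel_left₀ hprodpos.ne']
    have hsum : ∑ j, c j ^ 2 * deriv (deriv (fun t => fX (Function.update q j t))) (q j)
        = ∑ j, c j ^ 2 * B (e j) (e j) :=
      Finset.sum_congr rfl fun j _ => by rw [hBii j]
    rw [hsum, hfinal, hint_eq]
    ring
  -- final estimate
  have hgoal_eq : (fun n : ℕ =>
        ((1 / ∏ j, δ n j) *
            (∫ x : Fin m → ℝ, (∏ j, K ((q j - x j) / δ n j)) * fX x) - fX q)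
          - (κ / 2) * ∑ j, (δ n j) ^ 2 *
              deriv (deriv (fun t => fX (Function.update q j t))) (q j))
      = fun n => ∫ t : Fin m → ℝ, P t * rr (fun j => -(δ n j * t j)) := funext hrepr
  rw [hgoal_eq]
  have hS0 : Tendsto (fun n => ∑ j, (δ n j) ^ 2) atTop (𝓝 0) := by
    have h := tendsto_finset_sum (Finset.univ : Finset (Fin m))
      (fun j (_ : j ∈ Finset.univ) =>
        (show Tendsto (fun n => (δ n j) ^ 2) atTop (𝓝 0) by
          simpa using ((hδ0 j).pow 2)))
    simpa using h
  rw [isLittleO_iff]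
  intro ε hε
  have hR₀ne : R₀ ≠ 0 := hR₀pos.ne'
  have hε' : 0 < ε / R₀ ^ 2 := by positivity
  obtain ⟨η, hηpos, hη⟩ := Metric.eventually_nhds_iff_ball.1 (isLittleO_iff.1 htay hε')
  have hsq : Tendsto (fun n => R₀ * Real.sqrt (∑ j, (δ n j) ^ 2)) atTop (𝓝 0) := by
    have h1 : Tendsto (fun n => Real.sqrt (∑ j, (δ n j) ^ 2)) atTop (𝓝 0) := by
      have := (Real.continuous_sqrt.tendsto 0).comp hS0
      simpa [Function.comp_def] using this
    have := h1.const_mul R₀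
    simpa using this
  filter_upwards [hsq.eventually_lt_const hηpos] with n hn
  set S := ∑ j, (δ n j) ^ 2 with hSdef
  have hSnn : 0 ≤ S := Finset.sum_nonneg fun j _ => sq_nonneg _
  have hpt : ∀ t : Fin m → ℝ, ‖P t * rr (fun j => -(δ n j * t j))‖
      ≤ (ε / R₀ ^ 2 * (R₀ ^ 2 * S)) * P t := by
    intro t
    by_cases hcase : ∀ l, |t l| ≤ R₀
    · have hwb : ∀ j, |(-(δ n j * t j))| ≤ R₀ * Real.sqrt S := by
        intro j
        rw [abs_neg, abs_mul, abs_of_pos (hδpos n j)]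
        have h1 : δ n j ≤ Real.sqrt S := by
          have h2 : (δ n j) ^ 2 ≤ S :=
            Finset.single_le_sum (f := fun j => (δ n j) ^ 2)
              (fun j _ => sq_nonneg _) (Finset.mem_univ j)
          calc δ n j = Real.sqrt ((δ n j) ^ 2) := (Real.sqrt_sq (hδpos n j).le).symm
            _ ≤ Real.sqrt S := Real.sqrt_le_sqrt h2
        calc δ n j * |t j| ≤ Real.sqrt S * R₀ :=
              mul_le_mul h1 (hcase j) (abs_nonneg _) (Real.sqrt_nonneg _)
          _ = R₀ * Real.sqrt S := mul_comm _ _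
      have hwnorm : ‖(fun j => -(δ n j * t j) : Fin m → ℝ)‖ ≤ R₀ * Real.sqrt S := by
        rw [pi_norm_le_iff_of_nonneg (by positivity)]
        intro j
        rw [Real.norm_eq_abs]
        exact hwb j
      have hmem : (fun j => -(δ n j * t j) : Fin m → ℝ) ∈ Metric.ball (0 : Fin m → ℝ) η := by
        rw [Metric.mem_ball, dist_zero_right]
        exact lt_of_le_of_lt hwnorm hn
      have hrb := hη _ hmem
      have hsq2 : ‖(fun j => -(δ n j * t j) : Fin m → ℝ)‖ ^ 2 ≤ R₀ ^ 2 * S := by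
        calc ‖(fun j => -(δ n j * t j) : Fin m → ℝ)‖ ^ 2
            ≤ (R₀ * Real.sqrt S) ^ 2 :=
              pow_le_pow_left₀ (norm_nonneg _) hwnorm 2
          _ = R₀ ^ 2 * S := by rw [mul_pow, Real.sq_sqrt hSnn]
      have hrb2 : ‖rr (fun j => -(δ n j * t j))‖ ≤ ε / R₀ ^ 2 * (R₀ ^ 2 * S) := by
        refine le_trans hrb ?_
        rw [Real.norm_eq_abs, abs_of_nonneg (sq_nonneg _)]
        exact mul_le_mul_of_nonneg_left hsq2 hε'.le
      calc ‖P t * rr (fun j => -(δ n j * t j))‖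
          = P t * ‖rr (fun j => -(δ n j * t j))‖ := by
            rw [norm_mul, Real.norm_eq_abs (P t), abs_of_nonneg (hPnn t)]
        _ ≤ P t * (ε / R₀ ^ 2 * (R₀ ^ 2 * S)) :=
            mul_le_mul_of_nonneg_left hrb2 (hPnn t)
        _ = (ε / R₀ ^ 2 * (R₀ ^ 2 * S)) * P t := mul_comm _ _
    · push_neg at hcase
      obtain ⟨l, hl⟩ := hcase
      have hP0 : P t = 0 := Finset.prod_eq_zero (Finset.mem_univ l) (hKzero _ hl)
      rw [hP0, zero_mul, mul_zero, norm_zero]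
  calc ‖∫ t : Fin m → ℝ, P t * rr (fun j => -(δ n j * t j))‖
      ≤ ∫ t : Fin m → ℝ, (ε / R₀ ^ 2 * (R₀ ^ 2 * S)) * P t :=
        norm_integral_le_of_norm_le (hPint.const_mul _) (ae_of_all _ hpt)
    _ = (ε / R₀ ^ 2 * (R₀ ^ 2 * S)) * ∫ t : Fin m → ℝ, P t := integral_const_mul _ _
    _ = ε * S := by
        rw [hPone, mul_one, div_mul_eq_mul_div, mul_div_assoc]
        congr 1
        rw [mul_comm, mul_div_assoc, div_self (pow_ne_zero 2 hR₀ne), mul_one]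
    _ ≤ ε * ‖S‖ := mul_le_mul_of_nonneg_left (le_abs_self S) hε.le
end

section
/- Let F: ℝ → ℝ be a continuous strictly increasing function on a neighborhood 𝒴 of c with F(c) = β, and let F̂_n: ℝ → ℝ be random nondecreasing functions such that F̂_n(y) → F(y) in probability for each y ∈ 𝒴. Define Ŷ_n = inf{y : F̂_n(y) ≥ β}. Then Ŷ_n → c in probability as n → ∞. -/
open MeasureTheory Filter

/-- Consistency of the generalized inverse: if random nondecreasing functions `F̂_n`
converge pointwise in probability on a neighborhood `V` of `c` to a continuous strictly
increasing `F` with `F(c) = β`, then `Ŷ_n = inf{y : F̂_n(y) ≥ β} → c` in probability. -/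
theorem stmt12 {Ω : Type*} [MeasurableSpace Ω] (P : Measure Ω)
    [IsProbabilityMeasure P]
    (F : ℝ → ℝ) (Fhat : ℕ → Ω → ℝ → ℝ) (c β : ℝ) (V : Set ℝ)
    (hV : V ∈ nhds c)
    (hFcont : ContinuousOn F V)
    (hFmono : StrictMonoOn F V)
    (hFc : F c = β)
    (hmono : ∀ n ω, Monotone (Fhat n ω))
    (hmeas : ∀ n, Measurable (fun ω => sInf {y | β ≤ Fhat n ω y}))
    (hconv : ∀ y ∈ V, TendstoInMeasure P (fun n ω => Fhat n ω y) atTop (fun _ => F y)) :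
    TendstoInMeasure P (fun n ω => sInf {y | β ≤ Fhat n ω y}) atTop (fun _ => c) := by
  rw [tendstoInMeasure_iff_dist]
  intro ε hε
  obtain ⟨δ', hδ'0, hsub⟩ := Metric.mem_nhds_iff.mp hV
  set δ : ℝ := min (δ' / 2) (ε / 2) with hδdef
  have hδ0 : 0 < δ := lt_min (by linarith) (by linarith)
  have hδε : δ < ε := lt_of_le_of_lt (min_le_right _ _) (by linarith)
  have hIcc : Set.Icc (c - δ) (c + δ) ⊆ V := by
    intro x hx
    apply hsub
    simp only [Metric.mem_ball, Real.dist_eq]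
    have h1 : δ ≤ δ' / 2 := min_le_left _ _
    rcases hx with ⟨h2, h3⟩
    rw [abs_lt]; constructor <;> linarith
  have haV : c - δ ∈ V := hIcc ⟨le_refl _, by linarith⟩
  have hbV : c + δ ∈ V := hIcc ⟨by linarith, le_refl _⟩
  have hcV : c ∈ V := hIcc ⟨by linarith, by linarith⟩
  have hFa : F (c - δ) < β := by
    rw [← hFc]; exact hFmono haV hcV (by linarith)
  have hFb : β < F (c + δ) := by
    rw [← hFc]; exact hFmono hcV hbV (by linarith)
  have h1 := tendstoInMeasure_iff_dist.mp (hconv (c - δ) haV) (β - F (c - δ)) (by linarith)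
  have h2 := tendstoInMeasure_iff_dist.mp (hconv (c + δ) hbV) (F (c + δ) - β) (by linarith)
  have hincl : ∀ n, {ω | ε ≤ dist (sInf {y | β ≤ Fhat n ω y}) c} ⊆
      {ω | β - F (c - δ) ≤ dist (Fhat n ω (c - δ)) (F (c - δ))} ∪
      {ω | F (c + δ) - β ≤ dist (Fhat n ω (c + δ)) (F (c + δ))} := by
    intro n ω hω
    by_contra hcon
    simp only [Set.mem_union, Set.mem_setOf_eq, not_or, not_le, Real.dist_eq] at hcon
    rcases hcon with ⟨hA, hB⟩
    simp only [Set.mem_setOf_eq, Real.dist_eq] at hω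
    have hFa' : Fhat n ω (c - δ) < β := by
      have := abs_lt.mp hA; linarith [this.2]
    have hFb' : β ≤ Fhat n ω (c + δ) := by
      have := abs_lt.mp hB; linarith [this.1]
    set S : Set ℝ := {y | β ≤ Fhat n ω y} with hS
    have hne : S.Nonempty := ⟨c + δ, hFb'⟩
    have hlb : ∀ y ∈ S, c - δ ≤ y := by
      intro y hy
      by_contra h
      push_neg at h
      have : Fhat n ω y ≤ Fhat n ω (c - δ) := hmono n ω h.le
      have : β ≤ Fhat n ω (c - δ) := le_trans hy this
      linarith
    have hbdd : BddBelow S := ⟨c - δ, hlb⟩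
    have hle : sInf S ≤ c + δ := csInf_le hbdd hFb'
    have hge : c - δ ≤ sInf S := le_csInf hne hlb
    have : |sInf S - c| ≤ δ := abs_le.mpr ⟨by linarith, by linarith⟩
    linarith
  have hsum : Tendsto (fun n => P {ω | β - F (c - δ) ≤ dist (Fhat n ω (c - δ)) (F (c - δ))}
      + P {ω | F (c + δ) - β ≤ dist (Fhat n ω (c + δ)) (F (c + δ))}) atTop (nhds 0) := by
    simpa using h1.add h2
  refine tendsto_of_tendsto_of_tendsto_of_le_of_le tendsto_const_nhds hsum
    (fun n => zero_le) (fun n => ?_)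
  exact le_trans (measure_mono (hincl n)) (measure_union_le _ _)
end
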